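/- Let T(x,y,z) denote the symmetric trilinear polarization of the cubic triple product map, namely T(x,y,z) = (1/6)(T(x+y+z) − T(x+y) − T(x+z) − T(y+z) + T(x) + T(y) + T(z)). Then the four-linear form q(x,y,z,w) := {T(x,y,z), w} is totally symmetric: it is invariant under every permutation of its four three-qubit-state arguments x, y, z, w. -/

import Mathlib

open scoped BigOperators

/-- A three-qubit state: a tensor with indices `A B C : Fin 2` and complex entries. -/
abbrev QState := Fin 2 → Fin 2 → Fin 2 → ℂ

/-- The antisymmetric epsilon tensor on `{0,1}` with `ε 0 1 = 1`. -/
noncomputable def eps : Fin 2 → Fin 2 → ℂ := fun i j =>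
  if i = 0 ∧ j = 1 then 1 else if i = 1 ∧ j = 0 then -1 else 0

/-- The gamma matrix associated to the first (A) slot. -/
noncomputable def gammaA (a : QState) : Matrix (Fin 2) (Fin 2) ℂ :=
  Matrix.of fun A₁ A₂ => ∑ B₁, ∑ B₂, ∑ C₁, ∑ C₂,
    eps B₁ B₂ * eps C₁ C₂ * a A₁ B₁ C₁ * a A₂ B₂ C₂

/-- The gamma matrix associated to the second (B) slot. -/
noncomputable def gammaB (a : QState) : Matrix (Fin 2) (Fin 2) ℂ :=
  Matrix.of fun B₁ B₂ => ∑ C₁, ∑ C₂, ∑ A₁, ∑ A₂,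
    eps C₁ C₂ * eps A₁ A₂ * a A₁ B₁ C₁ * a A₂ B₂ C₂

/-- The gamma matrix associated to the third (C) slot. -/
noncomputable def gammaC (a : QState) : Matrix (Fin 2) (Fin 2) ℂ :=
  Matrix.of fun C₁ C₂ => ∑ A₁, ∑ A₂, ∑ B₁, ∑ B₂,
    eps A₁ A₂ * eps B₁ B₂ * a A₁ B₁ C₁ * a A₂ B₂ C₂

/-- The (cubic) triple product `T(a)_{A₃B₁C₁} = ε^{A₁A₂} a_{A₁B₁C₁} γ^A(a)_{A₂A₃}`. -/
noncomputable def Trip (a : QState) : QState := fun A₃ B₁ C₁ =>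
  ∑ A₁, ∑ A₂, eps A₁ A₂ * a A₁ B₁ C₁ * gammaA a A₂ A₃

/-- The symplectic bilinear form `{a,b} = ε^{AA'} ε^{BB'} ε^{CC'} a_{ABC} b_{A'B'C'}`. -/
noncomputable def symp (a b : QState) : ℂ :=
  ∑ A, ∑ A', ∑ B, ∑ B', ∑ C, ∑ C',
    eps A A' * eps B B' * eps C C' * a A B C * b A' B' C'

/-- Cayley's hyperdeterminant of a three-qubit state. -/
noncomputable def CayleyDet (a : QState) : ℂ :=
  (a 0 0 0)^2 * (a 1 1 1)^2 + (a 0 0 1)^2 * (a 1 1 0)^2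
    + (a 0 1 0)^2 * (a 1 0 1)^2 + (a 0 1 1)^2 * (a 1 0 0)^2
  - 2 * ( a 0 0 0 * a 0 0 1 * a 1 1 0 * a 1 1 1
        + a 0 0 0 * a 0 1 0 * a 1 0 1 * a 1 1 1
        + a 0 0 0 * a 0 1 1 * a 1 0 0 * a 1 1 1
        + a 0 0 1 * a 0 1 0 * a 1 0 1 * a 1 1 0
        + a 0 0 1 * a 0 1 1 * a 1 0 0 * a 1 1 0
        + a 0 1 0 * a 0 1 1 * a 1 0 0 * a 1 0 1 )
  + 4 * ( a 0 0 0 * a 0 1 1 * a 1 0 1 * a 1 1 0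
        + a 0 0 1 * a 0 1 0 * a 1 0 0 * a 1 1 1 )

/-- Symmetric trilinear polarization of the cubic triple product map. -/
noncomputable def Trip3 (x y z : QState) : QState :=
  (6 : ℂ)⁻¹ • (Trip (x + y + z) - Trip (x + y) - Trip (x + z) - Trip (y + z)
    + Trip x + Trip y + Trip z)


lemma Trip3_comm12 (x y z : QState) : Trip3 x y z = Trip3 y x z := by
  unfold Trip3
  rw [show y + x + z = x + y + z by abel, show y + x = x + y by abel]
  congr 1; abel

lemma Trip3_comm23 (x y z : QState) : Trip3 x y z = Trip3 x z y := by
  unfold Trip3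
  rw [show x + z + y = x + y + z by abel]
  congr 1; abel

set_option maxHeartbeats 4000000 in
lemma q3 (x y z w : QState) : symp (Trip3 x y z) w = symp (Trip3 x y w) z := by
  simp only [symp, Trip3, Trip, gammaA, Matrix.of_apply, Pi.smul_apply, Pi.add_apply,
    Pi.sub_apply, smul_eq_mul, Fin.sum_univ_two]
  norm_num [eps]
  ring

lemma q1 (x y z w : QState) : symp (Trip3 x y z) w = symp (Trip3 y x z) w := by
  rw [Trip3_comm12]

lemma q2 (x y z w : QState) : symp (Trip3 x y z) w = symp (Trip3 x z y) w := by
  rw [Trip3_comm23]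

lemma qs01 (a b c d : QState) : symp (Trip3 b a c) d = symp (Trip3 a b c) d := (q1 ..).symm
lemma qs12 (a b c d : QState) : symp (Trip3 a c b) d = symp (Trip3 a b c) d := (q2 ..).symm
lemma qs23 (a b c d : QState) : symp (Trip3 a b d) c = symp (Trip3 a b c) d := (q3 ..).symm
lemma qs02 (a b c d : QState) : symp (Trip3 c b a) d = symp (Trip3 a b c) d := by
  rw [q1, q2, q1]
lemma qs03 (a b c d : QState) : symp (Trip3 d b c) a = symp (Trip3 a b c) d := by
  rw [q3, qs02, q3]
lemma qs13 (a b c d : QState) : symp (Trip3 a d c) b = symp (Trip3 a b c) d := by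
  rw [q2, q3, q2]

noncomputable def Q (v : Fin 4 → QState) : ℂ := symp (Trip3 (v 0) (v 1) (v 2)) (v 3)

set_option maxHeartbeats 1000000 in
lemma Q_swap (i j : Fin 4) (v : Fin 4 → QState) :
    Q (v ∘ Equiv.swap i j) = Q v := by
  unfold Q
  fin_cases i <;> fin_cases j <;>
    simp only [Function.comp_apply] <;>
    norm_num [Equiv.swap_apply_def, Fin.ext_iff]
  · exact qs01 _ _ _ _
  · exact qs02 _ _ _ _
  · exact qs03 _ _ _ _
  · exact qs01 _ _ _ _
  · exact qs12 _ _ _ _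
  · exact qs13 _ _ _ _
  · exact qs02 _ _ _ _
  · exact qs12 _ _ _ _
  · exact qs23 _ _ _ _
  · exact qs03 _ _ _ _
  · exact qs13 _ _ _ _
  · exact qs23 _ _ _ _

lemma Q_perm (σ : Equiv.Perm (Fin 4)) : ∀ v : Fin 4 → QState, Q (v ∘ σ) = Q v := by
  refine Equiv.Perm.swap_induction_on (motive := fun σ => ∀ v : Fin 4 → QState, Q (v ∘ σ) = Q v)
    σ (fun v => rfl) ?_
  intro f a b hab ih v
  have h : v ∘ ⇑(Equiv.swap a b * f) = (v ∘ ⇑(Equiv.swap a b)) ∘ ⇑f := rfl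
  rw [h, ih, Q_swap]

/-- the four-linear form `q(x,y,z,w) := {T(x,y,z), w}` is totally
symmetric: it is invariant under every permutation of its four arguments. -/
theorem quartic_form_totally_symmetric
    (σ : Equiv.Perm (Fin 4)) (v : Fin 4 → QState) :
    symp (Trip3 (v (σ 0)) (v (σ 1)) (v (σ 2))) (v (σ 3)) =
      symp (Trip3 (v 0) (v 1) (v 2)) (v 3) := by
  exact Q_perm σ v
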